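/- arXiv:2202.01489 — 4 statements merged into one kernel-verified Lean document; each statement's English description precedes it below -/
import Mathlib

section
/- Fix σ_W², β > 0 and 0 < α < 1, and set D(M) = β·M^{-α}. Then the Gaussian rate loss L_N(D(M)) = ((M-1)/2)·log(1/(1 − (σ_W²/M)(1/D(M) − 1/σ_X²))) satisfies L_N(D(M)) / (γ·M^α) → 1 as M → ∞, where γ = σ_W²/(2β). -/
open Filter

/-- With `D(M) = β M^{-α}`, `0 < α < 1`, the Gaussian rate loss is asymptotically
equivalent to `γ M^α` with `γ = σW²/(2β)`. -/
theorem gaussian_rate_loss_asymptotic_sublinear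
    (σX2 σW2 β α : ℝ) (hσX : 0 < σX2) (hσW : 0 < σW2) (hβ : 0 < β)
    (hα1 : 0 < α) (hα2 : α < 1) :
    Tendsto
      (fun M : ℕ =>
        (((M : ℝ) - 1) / 2 *
            Real.log (1 / (1 - σW2 / M * (1 / (β * (M : ℝ) ^ (-α)) - 1 / σX2)))) /
          (σW2 / (2 * β) * (M : ℝ) ^ α))
      atTop (nhds 1) := by
  set f : ℕ → ℝ := fun M => σW2 / M * (1 / (β * (M : ℝ) ^ (-α)) - 1 / σX2) with hf_def
  have hMα : Tendsto (fun M : ℕ => (M : ℝ) ^ α) atTop atTop :=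
    (tendsto_rpow_atTop hα1).comp tendsto_natCast_atTop_atTop
  have hinv : Tendsto (fun M : ℕ => ((M:ℝ))⁻¹) atTop (nhds 0) :=
    tendsto_inv_atTop_zero.comp tendsto_natCast_atTop_atTop
  -- f → 0
  have hf0 : Tendsto f atTop (nhds 0) := by
    have h1 : Tendsto (fun M : ℕ => (M : ℝ) ^ (α - 1)) atTop (nhds 0) := by
      have := (tendsto_rpow_neg_atTop (show 0 < 1 - α by linarith)).comp
        (tendsto_natCast_atTop_atTop (R := ℝ))
      simpa [Function.comp_def, neg_sub] using this
    have heq : ∀ᶠ M : ℕ in atTop,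
        σW2 / β * (M : ℝ) ^ (α - 1) - σW2 / σX2 * ((M:ℝ))⁻¹ = f M := by
      filter_upwards [eventually_gt_atTop 0] with M hM
      have hM0 : (0:ℝ) < M := by exact_mod_cast hM
      have hMne : (M:ℝ) ≠ 0 := ne_of_gt hM0
      have hrw : (M:ℝ) ^ (-α) = ((M:ℝ) ^ α)⁻¹ := Real.rpow_neg hM0.le α
      have hsub : (M:ℝ) ^ (α - 1) = (M:ℝ) ^ α / M := by
        rw [Real.rpow_sub hM0, Real.rpow_one]
      have hαne : (M:ℝ) ^ α ≠ 0 := ne_of_gt (Real.rpow_pos_of_pos hM0 α)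
      simp only [hf_def, hrw, hsub]
      field_simp
    have hlim : Tendsto (fun M : ℕ => σW2 / β * (M : ℝ) ^ (α - 1) - σW2 / σX2 * ((M:ℝ))⁻¹)
        atTop (nhds 0) := by
      have := (h1.const_mul (σW2/β)).sub (hinv.const_mul (σW2/σX2))
      simpa using this
    exact hlim.congr' heq
  -- eventual positivity of f
  have hfpos : ∀ᶠ M : ℕ in atTop, 0 < f M := by
    filter_upwards [eventually_gt_atTop 0, hMα.eventually_ge_atTop (β / σX2 + 1)] with M hM hM2
    have hM0 : (0:ℝ) < M := by exact_mod_cast hM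
    have hαpos : (0:ℝ) < (M:ℝ) ^ α := Real.rpow_pos_of_pos hM0 α
    have hrw : (M:ℝ) ^ (-α) = ((M:ℝ) ^ α)⁻¹ := Real.rpow_neg hM0.le α
    have key : 1 / σX2 < 1 / (β * (M:ℝ) ^ (-α)) := by
      rw [hrw]
      have heq2 : 1 / (β * ((M:ℝ)^α)⁻¹) = (M:ℝ)^α / β := by
        field_simp
      rw [heq2, div_lt_div_iff₀ hσX hβ]
      have h3 : σX2 * (β / σX2 + 1) = β + σX2 := by field_simp
      nlinarith [mul_le_mul_of_nonneg_left hM2 hσX.le]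
    have hpos : (0:ℝ) < σW2 / M := by positivity
    simp only [hf_def]
    exact mul_pos hpos (by linarith)
  -- eventually f < 1
  have hflt : ∀ᶠ M : ℕ in atTop, f M < 1 := hf0.eventually_lt_const (by norm_num)
  -- A → 1 via derivative of -log(1-y) at 0
  have hslope : Tendsto (fun y : ℝ => -Real.log (1 - y) / y)
      (nhdsWithin 0 {(0:ℝ)}ᶜ) (nhds 1) := by
    have hd : HasDerivAt (fun y : ℝ => -Real.log (1 - y)) 1 0 := by
      have h1 : HasDerivAt (fun y : ℝ => 1 - y) (-1) 0 := (hasDerivAt_id 0).const_sub 1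
      have h2 := (Real.hasDerivAt_log (by norm_num : (1:ℝ) - 0 ≠ 0)).comp 0 h1
      have h3 := h2.neg
      simpa [Function.comp_def, Pi.neg_def] using h3
    have hs := hasDerivAt_iff_tendsto_slope.mp hd
    refine hs.congr ?_
    intro y
    simp [slope_fun_def]
    ring
  have hA : Tendsto (fun M : ℕ => -Real.log (1 - f M) / f M) atTop (nhds 1) := by
    refine hslope.comp ?_
    rw [tendsto_nhdsWithin_iff]
    exact ⟨hf0, hfpos.mono fun M h => by simpa using ne_of_gt h⟩
  -- C → 1
  have hC : Tendsto (fun M : ℕ => ((M:ℝ) - 1) / M * (1 - β / (σX2 * (M:ℝ) ^ α)))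
      atTop (nhds 1) := by
    have h1 : Tendsto (fun M : ℕ => ((M:ℝ) - 1) / M) atTop (nhds 1) := by
      have hbase : Tendsto (fun M : ℕ => 1 - ((M:ℝ))⁻¹) atTop (nhds 1) := by
        simpa using (tendsto_const_nhds (x := (1:ℝ)) (f := atTop (α := ℕ))).sub hinv
      refine hbase.congr' ?_
      filter_upwards [eventually_gt_atTop 0] with M hM
      have hMne : (M:ℝ) ≠ 0 := by positivity
      field_simp
    have h2 : Tendsto (fun M : ℕ => 1 - β / (σX2 * (M:ℝ) ^ α)) atTop (nhds 1) := by
      have hdenom : Tendsto (fun M : ℕ => σX2 * (M:ℝ) ^ α) atTop atTop :=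
        hMα.const_mul_atTop hσX
      have : Tendsto (fun M : ℕ => β / (σX2 * (M:ℝ) ^ α)) atTop (nhds 0) :=
        Tendsto.div_atTop tendsto_const_nhds hdenom
      simpa using (tendsto_const_nhds (x := (1:ℝ)) (f := atTop (α := ℕ))).sub this
    have := h1.mul h2
    simpa using this
  -- final eventual equality
  have heq : ∀ᶠ M : ℕ in atTop,
      (-Real.log (1 - f M) / f M) * (((M:ℝ) - 1) / M * (1 - β / (σX2 * (M:ℝ) ^ α))) =
      (((M : ℝ) - 1) / 2 *
          Real.log (1 / (1 - σW2 / M * (1 / (β * (M : ℝ) ^ (-α)) - 1 / σX2)))) /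
        (σW2 / (2 * β) * (M : ℝ) ^ α) := by
    filter_upwards [eventually_gt_atTop 0, hfpos, hflt,
      hMα.eventually_ge_atTop (β / σX2 + 1)] with M hM hp hl hM2
    have hM0 : (0:ℝ) < M := by exact_mod_cast hM
    have hMne : (M:ℝ) ≠ 0 := ne_of_gt hM0
    have hαpos : (0:ℝ) < (M:ℝ) ^ α := Real.rpow_pos_of_pos hM0 α
    have hαne : (M:ℝ) ^ α ≠ 0 := ne_of_gt hαpos
    have hrw : (M:ℝ) ^ (-α) = ((M:ℝ) ^ α)⁻¹ := Real.rpow_neg hM0.le α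
    have hne2 : σX2 * (M:ℝ) ^ α - β ≠ 0 := by
      have h3 : σX2 * (β / σX2 + 1) = β + σX2 := by field_simp
      nlinarith [mul_le_mul_of_nonneg_left hM2 hσX.le]
    rw [one_div, Real.log_inv]
    simp only [hf_def]
    rw [hrw]
    have hffact : σW2 / ↑M * (1 / (β * ((M:ℝ) ^ α)⁻¹) - 1 / σX2) =
        σW2 * (σX2 * (M:ℝ) ^ α - β) / (↑M * β * σX2) := by
      field_simp
    rw [hffact]
    set L := Real.log (1 - σW2 * (σX2 * (M:ℝ) ^ α - β) / (↑M * β * σX2)) with hL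
    field_simp
  exact Tendsto.congr' heq (by simpa using hA.mul hC)
end

section
/- Fix σ_W², β > 0 with β > σ_W², and set D(M) = β/M. Then the Gaussian rate loss L_N(D(M)) = ((M-1)/2)·log(1/(1 − (σ_W²/M)(M/β − 1/σ_X²))) satisfies L_N(D(M))/M → (1/2)·log(β/(β − σ_W²)) as M → ∞. -/
open Filter

/-- With `D(M) = β/M`, `β > σW²`, the Gaussian rate loss satisfies
`L_N(D(M))/M → (1/2) log(β/(β − σW²))`. -/
theorem gaussian_rate_loss_asymptotic_linear
    (σX2 σW2 β : ℝ) (hσX : 0 < σX2) (hσW : 0 < σW2) (hβ : σW2 < β) :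
    Tendsto
      (fun M : ℕ =>
        (((M : ℝ) - 1) / 2 *
            Real.log (1 / (1 - σW2 / M * ((M : ℝ) / β - 1 / σX2)))) / (M : ℝ))
      atTop (nhds (1 / 2 * Real.log (β / (β - σW2)))) := by
  have hβ0 : 0 < β := hσW.trans hβ
  have hb : 0 < 1 - σW2 / β := by
    rw [sub_pos, div_lt_one hβ0]; exact hβ
  -- small term tends to 0
  have hlim1 : Tendsto (fun M : ℕ => σW2 / ((M : ℝ) * σX2)) atTop (nhds 0) := by
    apply Tendsto.div_atTop tendsto_const_nhds
    exact Tendsto.atTop_mul_const hσX tendsto_natCast_atTop_atTop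
  have hsum : Tendsto (fun M : ℕ => 1 - σW2 / β + σW2 / ((M : ℝ) * σX2)) atTop
      (nhds (1 - σW2 / β)) := by
    have h : Tendsto (fun M : ℕ => (1 - σW2 / β) + σW2 / ((M : ℝ) * σX2)) atTop
        (nhds ((1 - σW2 / β) + 0)) := Tendsto.add tendsto_const_nhds hlim1
    simpa using h
  have hinv : Tendsto (fun M : ℕ => 1 / (1 - σW2 / β + σW2 / ((M : ℝ) * σX2))) atTop
      (nhds (β / (β - σW2))) := by
    have h := hsum.inv₀ (ne_of_gt hb)
    have heq : (1 - σW2 / β)⁻¹ = β / (β - σW2) := by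
      field_simp
    rw [heq] at h
    simpa [one_div] using h
  have hlog : Tendsto (fun M : ℕ => Real.log (1 / (1 - σW2 / β + σW2 / ((M : ℝ) * σX2))))
      atTop (nhds (Real.log (β / (β - σW2)))) := by
    exact hinv.log (ne_of_gt (div_pos hβ0 (sub_pos.mpr hβ)))
  have hfrac : Tendsto (fun M : ℕ => ((M : ℝ) - 1) / (M : ℝ)) atTop (nhds 1) := by
    have h0 : Tendsto (fun M : ℕ => 1 - 1 / (M : ℝ)) atTop (nhds 1) := by
      have h : Tendsto (fun M : ℕ => (1:ℝ) - 1 / (M : ℝ)) atTop (nhds (1 - 0)) :=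
        Tendsto.sub tendsto_const_nhds tendsto_one_div_atTop_nhds_zero_nat
      simpa using h
    apply h0.congr'
    filter_upwards [eventually_ge_atTop 1] with M hM
    have hM0 : (M : ℝ) ≠ 0 := by positivity
    field_simp
  have hmain : Tendsto
      (fun M : ℕ => ((M : ℝ) - 1) / (M : ℝ) *
        (1 / 2 * Real.log (1 / (1 - σW2 / β + σW2 / ((M : ℝ) * σX2)))))
      atTop (nhds (1 / 2 * Real.log (β / (β - σW2)))) := by
    have h : Tendsto (fun M : ℕ => ((M : ℝ) - 1) / (M : ℝ) *
        (1 / 2 * Real.log (1 / (1 - σW2 / β + σW2 / ((M : ℝ) * σX2))))) atTop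
        (nhds (1 * (1 / 2 * Real.log (β / (β - σW2))))) :=
      Tendsto.mul hfrac (Tendsto.mul tendsto_const_nhds hlog)
    simpa using h
  apply hmain.congr'
  filter_upwards [eventually_ge_atTop 1] with M hM
  have hM0 : (M : ℝ) ≠ 0 := by positivity
  have key : 1 - σW2 / (M : ℝ) * ((M : ℝ) / β - 1 / σX2)
      = 1 - σW2 / β + σW2 / ((M : ℝ) * σX2) := by
    field_simp
    ring
  rw [key]
  ring
end

section
/- Fix M ≥ 2 and σ_X², σ_W² > 0, let D₀ = σ_X²σ_W²/(Mσ_X²+σ_W²) be the minimal distortion, and set D = D₀ + δ. Then as δ → 0⁺, the Gaussian rate loss satisfies L_N(D₀+δ) − ((M−1)/2)·log(1/δ) → ((M−1)/2)·log(Mσ_W²σ_X⁴/(Mσ_X²+σ_W²)²). In particular L_N(D₀+δ)/(((M−1)/2)·log(1/δ)) → 1. -/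
open Filter

/-- Expansion of the Gaussian rate loss around the minimal distortion
`D₀ = σX²σW²/(MσX²+σW²)`: as `δ → 0⁺`,
`L_N(D₀+δ) − ((M−1)/2) log(1/δ) → ((M−1)/2) log(MσW²σX⁴/(MσX²+σW²)²)`, and in
particular `L_N(D₀+δ)` is asymptotically equivalent to `((M−1)/2) log(1/δ)`. -/
theorem gaussian_rate_loss_small_delta
    (M : ℕ) (hM : 2 ≤ M) (σX2 σW2 : ℝ) (hσX : 0 < σX2) (hσW : 0 < σW2) :
    Tendsto
      (fun δ : ℝ =>
        ((M : ℝ) - 1) / 2 *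
            Real.log (1 / (1 - σW2 / M *
              (1 / (σX2 * σW2 / (M * σX2 + σW2) + δ) - 1 / σX2))) -
          ((M : ℝ) - 1) / 2 * Real.log (1 / δ))
      (nhdsWithin 0 (Set.Ioi 0))
      (nhds (((M : ℝ) - 1) / 2 *
        Real.log (M * σW2 * σX2 ^ 2 / (M * σX2 + σW2) ^ 2))) ∧
    Tendsto
      (fun δ : ℝ =>
        (((M : ℝ) - 1) / 2 *
            Real.log (1 / (1 - σW2 / M *
              (1 / (σX2 * σW2 / (M * σX2 + σW2) + δ) - 1 / σX2)))) /
          (((M : ℝ) - 1) / 2 * Real.log (1 / δ)))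
      (nhdsWithin 0 (Set.Ioi 0)) (nhds 1) := by
  have hMpos : (0:ℝ) < (M:ℝ) := by
    have : (2:ℝ) ≤ (M:ℝ) := by exact_mod_cast hM
    linarith
  have hc : (0:ℝ) < ((M:ℝ) - 1) / 2 := by
    have : (2:ℝ) ≤ (M:ℝ) := by exact_mod_cast hM
    linarith
  set c : ℝ := ((M:ℝ) - 1) / 2 with hcdef
  have hS : (0:ℝ) < M * σX2 + σW2 := by positivity
  set S : ℝ := M * σX2 + σW2 with hSdef
  set D0 : ℝ := σX2 * σW2 / S with hD0def
  have hD0 : 0 < D0 := by positivity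
  -- key algebraic identity
  have key : ∀ δ : ℝ, 0 < δ →
      1 - σW2 / M * (1 / (σX2 * σW2 / (M * σX2 + σW2) + δ) - 1 / σX2)
        = δ * S / (M * σX2 * (D0 + δ)) := by
    intro δ hδ
    have h1 : (0:ℝ) < D0 + δ := by positivity
    have h1' : σX2 * σW2 / (M * σX2 + σW2) + δ ≠ 0 := by
      rw [← hSdef, ← hD0def]; exact h1.ne'
    simp only [hD0def, hSdef]
    field_simp
    ring
  -- the difference function agrees with a nice function on Ioi 0
  have heq : ∀ δ : ℝ, 0 < δ →
      c * Real.log (1 / (1 - σW2 / M *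
          (1 / (σX2 * σW2 / (M * σX2 + σW2) + δ) - 1 / σX2)))
        - c * Real.log (1 / δ)
      = c * Real.log (M * σX2 * (D0 + δ) / S) := by
    intro δ hδ
    have h1 : (0:ℝ) < D0 + δ := by positivity
    rw [key δ hδ]
    have hx : (0:ℝ) < M * σX2 * (D0 + δ) / S := by positivity
    have hinv : 1 / (δ * S / (M * σX2 * (D0 + δ)))
        = (M * σX2 * (D0 + δ) / S) * (1 / δ) := by
      field_simp
    rw [hinv, Real.log_mul hx.ne' (by positivity : (1:ℝ)/δ ≠ 0)]
    ring
  -- limit of the nice function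
  have hargval : M * σX2 * (D0 + 0) / S = M * σW2 * σX2 ^ 2 / S ^ 2 := by
    rw [hD0def]
    field_simp
    ring
  have hlim1 : Tendsto (fun δ : ℝ => c * Real.log (M * σX2 * (D0 + δ) / S))
      (nhdsWithin 0 (Set.Ioi 0))
      (nhds (c * Real.log (M * σW2 * σX2 ^ 2 / S ^ 2))) := by
    have harg : Tendsto (fun δ : ℝ => M * σX2 * (D0 + δ) / S)
        (nhdsWithin 0 (Set.Ioi 0)) (nhds (M * σX2 * (D0 + 0) / S)) := by
      apply Tendsto.mono_left _ nhdsWithin_le_nhds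
      exact (Continuous.div_const (by continuity) S).tendsto 0
    rw [hargval] at harg
    have hpos : (0:ℝ) < M * σW2 * σX2 ^ 2 / S ^ 2 := by positivity
    exact ((Real.continuousAt_log hpos.ne').tendsto.comp harg).const_mul c
  have hdiff : Tendsto
      (fun δ : ℝ =>
        c * Real.log (1 / (1 - σW2 / M *
              (1 / (σX2 * σW2 / (M * σX2 + σW2) + δ) - 1 / σX2))) -
          c * Real.log (1 / δ))
      (nhdsWithin 0 (Set.Ioi 0))
      (nhds (c * Real.log (M * σW2 * σX2 ^ 2 / S ^ 2))) := by
    refine hlim1.congr' ?_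
    filter_upwards [self_mem_nhdsWithin] with δ hδ
    exact (heq δ hδ).symm
  constructor
  · exact hdiff
  · -- denominator tends to atTop
    have hdenom : Tendsto (fun δ : ℝ => c * Real.log (1 / δ))
        (nhdsWithin 0 (Set.Ioi 0)) atTop := by
      have h1 : Tendsto (fun δ : ℝ => 1 / δ) (nhdsWithin 0 (Set.Ioi 0)) atTop := by
        simpa using tendsto_inv_nhdsGT_zero
      exact (Real.tendsto_log_atTop.comp h1).const_mul_atTop hc
    have hzero : Tendsto
        (fun δ : ℝ =>
          (c * Real.log (1 / (1 - σW2 / M *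
                (1 / (σX2 * σW2 / (M * σX2 + σW2) + δ) - 1 / σX2))) -
            c * Real.log (1 / δ)) / (c * Real.log (1 / δ)))
        (nhdsWithin 0 (Set.Ioi 0)) (nhds 0) :=
      hdiff.div_atTop hdenom
    have hone : Tendsto
        (fun δ : ℝ =>
          (c * Real.log (1 / (1 - σW2 / M *
                (1 / (σX2 * σW2 / (M * σX2 + σW2) + δ) - 1 / σX2))) -
            c * Real.log (1 / δ)) / (c * Real.log (1 / δ)) + 1)
        (nhdsWithin 0 (Set.Ioi 0)) (nhds 1) := by
      simpa using hzero.add tendsto_const_nhds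
    refine hone.congr' ?_
    have hIoo : Set.Ioo (0:ℝ) 1 ∈ nhdsWithin (0:ℝ) (Set.Ioi 0) :=
      Ioo_mem_nhdsGT_of_mem (by constructor <;> norm_num)
    filter_upwards [hIoo] with δ hδ
    have hlogpos : 0 < Real.log (1 / δ) := by
      apply Real.log_pos
      rw [lt_div_iff₀ hδ.1]
      simpa using hδ.2
    have hd : c * Real.log (1 / δ) ≠ 0 := by positivity
    have habc : ∀ a b : ℝ, b ≠ 0 → (a - b) / b + 1 = a / b := by
      intro a b hb; field_simp; ring
    exact habc _ _ hd
end

section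
/- Fix M ≥ 2, σ_X², σ_W² > 0 and let D₀ = σ_X²(σ_W²/M)/(σ_X² + σ_W²/M). Suppose g(δ) = (1/2)log(σ_X²/N_V) + (M/2)log(1/(1 − (σ_W²/M)(1/(D₀+δ) − 1/σ_X²))) − (1/2)log((D₀+δ)/(D₀+δ − m)) for positive constants N_V ≤ σ_X² and m ≤ D₀. Then g(δ)/((M/2)·log(1/δ)) → 1 as δ → 0⁺. -/
open Filter

/-- For fixed `M`, as the distortion approaches the minimal distortion
`D₀ = σX²(σW²/M)/(σX²+σW²/M)` from above, the rate-loss upper bound `g(δ)` is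
asymptotically equivalent to `(M/2) log(1/δ)`. -/
theorem rate_loss_upper_bound_small_delta
    (M : ℕ) (hM : 2 ≤ M) (σX2 σW2 NV m : ℝ)
    (hσX : 0 < σX2) (hσW : 0 < σW2)
    (hNV : 0 < NV) (hNV2 : NV ≤ σX2)
    (hm : 0 < m) (hm2 : m < σX2 * (σW2 / M) / (σX2 + σW2 / M)) :
    Tendsto
      (fun δ : ℝ =>
        (1 / 2 * Real.log (σX2 / NV) +
            (M : ℝ) / 2 * Real.log (1 / (1 - σW2 / M *
              (1 / (σX2 * (σW2 / M) / (σX2 + σW2 / M) + δ) - 1 / σX2))) -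
            1 / 2 * Real.log ((σX2 * (σW2 / M) / (σX2 + σW2 / M) + δ) /
              (σX2 * (σW2 / M) / (σX2 + σW2 / M) + δ - m))) /
          ((M : ℝ) / 2 * Real.log (1 / δ)))
      (nhdsWithin 0 (Set.Ioi 0)) (nhds 1) := by
  have hMpos : (0:ℝ) < M := by
    have : (2:ℝ) ≤ M := by exact_mod_cast hM
    linarith
  set s : ℝ := σW2 / M with hs
  have hspos : 0 < s := div_pos hσW hMpos
  set D0 : ℝ := σX2 * s / (σX2 + s) with hD0
  have hsum : 0 < σX2 + s := by linarith
  have hD0pos : 0 < D0 := by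
    rw [hD0]; positivity
  have hDm : 0 < D0 - m := by linarith
  set r : ℝ → ℝ := fun δ =>
    1 / 2 * Real.log (σX2 / NV) +
      (M : ℝ) / 2 * Real.log ((D0 + δ) * σX2 / (σX2 + s)) -
      1 / 2 * Real.log ((D0 + δ) / (D0 + δ - m)) with hrdef
  -- denominator tends to atTop
  have hlog : Tendsto (fun δ : ℝ => (M:ℝ)/2 * Real.log (1/δ))
      (nhdsWithin 0 (Set.Ioi 0)) atTop := by
    apply Tendsto.const_mul_atTop (by positivity : (0:ℝ) < (M:ℝ)/2)
    have h1 : Tendsto Real.log (nhdsWithin 0 (Set.Ioi (0:ℝ))) atBot :=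
      Real.tendsto_log_nhdsGT_zero
    have h2 : Tendsto (fun δ : ℝ => -Real.log δ)
        (nhdsWithin 0 (Set.Ioi 0)) atTop := tendsto_neg_atBot_atTop.comp h1
    refine h2.congr fun δ => ?_
    rw [one_div, Real.log_inv]
  -- r tends to r 0
  have hr0 : Tendsto r (nhdsWithin 0 (Set.Ioi 0)) (nhds (r 0)) := by
    refine Tendsto.mono_left ?_ nhdsWithin_le_nhds
    apply ContinuousAt.tendsto
    apply ContinuousAt.sub
    · apply ContinuousAt.add continuousAt_const
      apply ContinuousAt.mul continuousAt_const
      apply ContinuousAt.log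
      · fun_prop
      · simp only [add_zero]
        positivity
    · apply ContinuousAt.mul continuousAt_const
      apply ContinuousAt.log
      · apply ContinuousAt.div <;> try fun_prop
        simp only [add_zero]
        linarith
      · simp only [add_zero]
        intro h
        have := div_eq_zero_iff.mp h
        rcases this with h | h
        · linarith
        · linarith
  -- eventual equality
  have key : ∀ᶠ δ in nhdsWithin (0:ℝ) (Set.Ioi 0),
      (1 / 2 * Real.log (σX2 / NV) +
            (M : ℝ) / 2 * Real.log (1 / (1 - s *
              (1 / (D0 + δ) - 1 / σX2))) -
            1 / 2 * Real.log ((D0 + δ) / (D0 + δ - m))) /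
          ((M : ℝ) / 2 * Real.log (1 / δ))
        = 1 + r δ / ((M:ℝ)/2 * Real.log (1/δ)) := by
    have hmem : Set.Ioo (0:ℝ) 1 ∈ nhdsWithin (0:ℝ) (Set.Ioi 0) :=
      Ioo_mem_nhdsGT_of_mem (by constructor <;> norm_num)
    filter_upwards [hmem] with δ hδ
    obtain ⟨hδ0, hδ1⟩ := hδ
    have hD0δ : 0 < D0 + δ := by linarith
    have hlogδ : 0 < Real.log (1/δ) := by
      rw [one_div]
      apply Real.log_pos
      rw [lt_inv_comm₀] <;> simp [hδ0, hδ1]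
    have hA : ((M:ℝ)/2 * Real.log (1/δ)) ≠ 0 := by positivity
    have hinner : 1 - s * (1 / (D0 + δ) - 1 / σX2)
        = δ * (σX2 + s) / ((D0 + δ) * σX2) := by
      rw [hD0]
      field_simp
      ring
    have hfrac : 1 / (δ * (σX2 + s) / ((D0 + δ) * σX2))
        = (1/δ) * ((D0 + δ) * σX2 / (σX2 + s)) := by
      field_simp
    have hlogeq : Real.log (1 / (1 - s * (1 / (D0 + δ) - 1 / σX2)))
        = Real.log (1/δ) + Real.log ((D0 + δ) * σX2 / (σX2 + s)) := by
      rw [hinner, hfrac, Real.log_mul (by positivity) (by positivity)]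
    have hnum : (1 / 2 * Real.log (σX2 / NV) +
            (M : ℝ) / 2 * Real.log (1 / (1 - s *
              (1 / (D0 + δ) - 1 / σX2))) -
            1 / 2 * Real.log ((D0 + δ) / (D0 + δ - m)))
        = (M:ℝ)/2 * Real.log (1/δ) + r δ := by
      rw [hlogeq, hrdef]
      ring
    rw [hnum, add_div, div_self hA]
  refine Tendsto.congr' (key.mono fun δ h => h.symm) ?_
  have : Tendsto (fun δ => 1 + r δ / ((M:ℝ)/2 * Real.log (1/δ)))
      (nhdsWithin 0 (Set.Ioi 0)) (nhds (1 + 0)) :=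
    tendsto_const_nhds.add (hr0.div_atTop hlog)
  simpa using this
end
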